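/- No vertex of a graph admitting an empty-ply drawing has degree greater than 24. That is, if Γ is an empty-ply straight-line drawing of a finite graph G in the plane, then every vertex of G has at most 24 neighbors. -/

import Mathlib

open Real EuclideanGeometry Metric

noncomputable def plyRadius {V : Type*} (G : SimpleGraph V)
    (pos : V → EuclideanSpace ℝ (Fin 2)) (v : V) : ℝ :=
  (1 / 2) * ⨆ w ∈ G.neighborSet v, dist (pos v) (pos w)

/-- A drawing is empty-ply if no ply-disk contains a vertex other than its center
in its interior. -/
def IsEmptyPly {V : Type*} (G : SimpleGraph V)
    (pos : V → EuclideanSpace ℝ (Fin 2)) : Prop :=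
  ∀ u v : V, u ≠ v → plyRadius G pos v ≤ dist (pos u) (pos v)

lemma cos_quartic_lower {x : ℝ} (hx : |x| ≤ 1) :
    1 - x^2/2 + 7*x^4/384 ≤ Real.cos x := by
  have hx2 : |x/2| ≤ 1 := by
    rw [abs_div, abs_two]
    linarith [abs_nonneg x]
  have hb := Real.cos_bound hx2
  have habs4 : |x/2| ^ 4 = x^4/16 := by
    rw [← abs_pow, abs_of_nonneg (by positivity)]; ring
  have hq : 1 - x^2/8 - 5*x^4/1536 ≤ Real.cos (x/2) := by
    rw [abs_le] at hb
    have := hb.1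
    rw [habs4] at this
    nlinarith [this]
  have hx1 : x^2 ≤ 1 := by
    rw [abs_le] at hx; nlinarith [hx.1, hx.2]
  have hq0 : (0:ℝ) ≤ 1 - x^2/8 - 5*x^4/1536 := by nlinarith [sq_nonneg x]
  have hcm : Real.cos x = 2 * Real.cos (x/2)^2 - 1 := by
    have := Real.cos_two_mul (x/2)
    rw [show 2 * (x/2) = x by ring] at this
    linarith
  rw [hcm]
  nlinarith [mul_self_le_mul_self hq0 hq, sq_nonneg (x^3), sq_nonneg (x^4), sq_nonneg x]

lemma cos_2pi13 : (8839/10000 : ℝ) ≤ Real.cos (2*π/13) := by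
  have hl := Real.pi_gt_d6
  have hu := Real.pi_lt_d6
  have h2u : π^2 < 9.8696067 := by nlinarith
  have h2l : (9.8696002 : ℝ) < π^2 := by nlinarith [hl, sq_nonneg (π - 3.141592)]
  have h4l : (97.4089 : ℝ) < π^4 := by nlinarith
  have hx : |2*π/13| ≤ 1 := by
    rw [abs_of_nonneg (by positivity)]; nlinarith
  have := cos_quartic_lower hx
  have heval : (8839/10000 : ℝ) ≤ 1 - (2*π/13)^2/2 + 7*(2*π/13)^4/384 := by
    have e1 : (2*π/13)^2 = 4*π^2/169 := by ring
    have e2 : (2*π/13)^4 = 16*π^4/28561 := by ring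
    rw [e1, e2]
    nlinarith
  linarith

lemma lawcos (z w : ℂ) (hz : z ≠ 0) (hw : w ≠ 0) :
    ‖z - w‖^2 = ‖z‖^2 + ‖w‖^2
      - 2 * ‖z‖ * ‖w‖ * Real.cos (z.arg - w.arg) := by
  have ha : ‖z‖ ≠ 0 := by simpa using hz
  have hb : ‖w‖ ≠ 0 := by simpa using hw
  have hz2 : ‖z‖ ^ 2 = z.re^2 + z.im^2 := by
    rw [Complex.sq_norm, Complex.normSq_apply]; ring
  have hw2 : ‖w‖ ^ 2 = w.re^2 + w.im^2 := by
    rw [Complex.sq_norm, Complex.normSq_apply]; ring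
  have hzw2 : ‖z - w‖ ^ 2 = (z.re - w.re)^2 + (z.im - w.im)^2 := by
    rw [Complex.sq_norm, Complex.normSq_apply]; simp [Complex.sub_re, Complex.sub_im]; ring
  rw [Real.cos_sub, Complex.cos_arg hz, Complex.cos_arg hw, Complex.sin_arg, Complex.sin_arg,
    hz2, hw2, hzw2]
  field_simp
  nlinarith [hz2, hw2, sq_nonneg (‖z‖), sq_nonneg (‖w‖)]

lemma circle_pigeonhole (θ : Fin 13 → ℝ) :
    ∃ i j : Fin 13, i ≠ j ∧ (|θ i - θ j| ≤ 2*π/13 ∨ 2*π - |θ i - θ j| ≤ 2*π/13) := by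
  by_contra hcon
  push_neg at hcon
  set σ := Tuple.sort θ with hσ
  have hm : Monotone (θ ∘ σ) := Tuple.monotone_sort θ
  have key : ∀ a b : Fin 13, a < b → 2*π/13 < θ (σ b) - θ (σ a) := by
    intro a b hab
    have hne : σ a ≠ σ b := fun h => absurd (σ.injective h) (ne_of_lt hab)
    have h1 := (hcon (σ a) (σ b) hne).1
    have h2 : θ (σ a) ≤ θ (σ b) := hm hab.le
    rw [abs_sub_comm, abs_of_nonneg (by linarith)] at h1
    exact h1
  have h02 : θ (σ 0) ≤ θ (σ 12) := hm (by decide)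
  have hne02 : σ 0 ≠ σ 12 := fun h => absurd (σ.injective h) (by decide)
  have hlast := (hcon (σ 0) (σ 12) hne02).2
  rw [abs_sub_comm, abs_of_nonneg (by linarith)] at hlast
  linarith [key 0 1 (by decide), key 1 2 (by decide), key 2 3 (by decide),
    key 3 4 (by decide), key 4 5 (by decide), key 5 6 (by decide), key 6 7 (by decide),
    key 7 8 (by decide), key 8 9 (by decide), key 9 10 (by decide), key 10 11 (by decide),
    key 11 12 (by decide)]

lemma final_ineq {r s c d : ℝ} (hs : 0 < s) (hr1 : 7071/10000 * s ≤ r) (hr2 : r ≤ s)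
    (hc : 8839/10000 ≤ c) (_hd0 : 0 ≤ d) (hd : s ≤ 2 * d)
    (hlaw : d^2 = r^2 + s^2 - 2*r*s*c) : False := by
  nlinarith [mul_nonneg (sub_nonneg.mpr hr2) (sub_nonneg.mpr hr1), mul_pos hs hs,
    mul_le_mul_of_nonneg_right hr1 hs.le,
    mul_le_mul_of_nonneg_left hc
      (mul_nonneg (mul_nonneg (by norm_num : (0:ℝ) ≤ 2) (le_trans (by nlinarith) hr1)) hs.le),
    sq_nonneg (2*d - s)]

lemma le_two_plyRadius {V : Type*} [Fintype V] (G : SimpleGraph V)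
    (pos : V → EuclideanSpace ℝ (Fin 2)) {v w : V} (h : G.Adj v w) :
    dist (pos v) (pos w) ≤ 2 * plyRadius G pos v := by
  rw [plyRadius]
  have hb : BddAbove (Set.range fun u => ⨆ _ : u ∈ G.neighborSet v, dist (pos v) (pos u)) :=
    Set.Finite.bddAbove (Set.finite_range _)
  have h1 := le_ciSup hb w
  rw [ciSup_pos (show w ∈ G.neighborSet v from h)] at h1
  linarith

noncomputable def eC : EuclideanSpace ℝ (Fin 2) → ℂ := fun x => ⟨x 0, x 1⟩

lemma eC_dist (a b : EuclideanSpace ℝ (Fin 2)) : dist (eC a) (eC b) = dist a b := by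
  rw [Complex.dist_eq_re_im, EuclideanSpace.dist_eq]
  simp [eC, Fin.sum_univ_two, Real.dist_eq, sq_abs]

theorem stmt10 {V : Type*} [Fintype V] (G : SimpleGraph V)
    (pos : V → EuclideanSpace ℝ (Fin 2)) (hinj : Function.Injective pos)
    (hep : IsEmptyPly G pos) :
    ∀ v : V, (G.neighborSet v).ncard ≤ 24 := by
  classical
  intro v
  by_contra hcard
  push_neg at hcard
  have hfin : (G.neighborSet v).ncard = (G.neighborFinset v).card := by
    rw [SimpleGraph.neighborFinset_def, Set.ncard_eq_toFinset_card']
  set s := G.neighborFinset v with hs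
  have hs25 : 25 ≤ s.card := by omega
  set M := 2 * plyRadius G pos v with hM
  set D : V → ℝ := fun w => dist (pos v) (pos w) with hDdef
  have hadj : ∀ w ∈ s, G.Adj v w := by
    intro w hw
    rw [hs, SimpleGraph.mem_neighborFinset] at hw
    exact hw
  have hA : ∀ w ∈ s, D w ≤ M := fun w hw => le_two_plyRadius G pos (hadj w hw)
  have hvne : ∀ w ∈ s, w ≠ v := fun w hw => (hadj w hw).ne'
  have hDpos : ∀ w ∈ s, 0 < D w := fun w hw =>
    dist_pos.mpr (fun hh => (hadj w hw).ne (hinj hh))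
  have hB : ∀ w ∈ s, M ≤ 2 * D w := by
    intro w hw
    have h := hep w v (hvne w hw)
    have h2 : dist (pos w) (pos v) = D w := dist_comm _ _
    rw [hM]; linarith
  have hM0 : 0 < M := by
    obtain ⟨w, hw⟩ := Finset.card_pos.mp (by omega : 0 < s.card)
    exact lt_of_lt_of_le (hDpos w hw) (hA w hw)
  have hC : ∀ u w, u ∈ s → w ∈ s → u ≠ w → D w ≤ 2 * dist (pos u) (pos w) := by
    intro u w hu hw huw
    have h1 : dist (pos w) (pos v) ≤ 2 * plyRadius G pos w :=
      le_two_plyRadius G pos ((hadj w hw).symm)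
    have h2 := hep u w huw
    have h3 : D w = dist (pos w) (pos v) := dist_comm _ _
    linarith
  -- radius classes
  have hsplit := Finset.card_filter_add_card_filter_not
    (s := s) (p := fun w => D w ≤ 7071/10000 * M)
  have hcase : 13 ≤ (s.filter (fun w => D w ≤ 7071/10000 * M)).card ∨
      13 ≤ (s.filter (fun w => ¬ (D w ≤ 7071/10000 * M))).card := by omega
  obtain ⟨t, hts, ht13, hrat⟩ : ∃ t : Finset V, t ⊆ s ∧ t.card = 13 ∧
      ∀ u ∈ t, ∀ w ∈ t, 7071/10000 * D w ≤ D u := by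
    rcases hcase with h | h
    · obtain ⟨t, ht1, htc⟩ := Finset.exists_subset_card_eq h
      refine ⟨t, ht1.trans (Finset.filter_subset _ _), htc, fun u hu w hw => ?_⟩
      have hu' := Finset.mem_filter.mp (ht1 hu)
      have hw' := Finset.mem_filter.mp (ht1 hw)
      have h1 := hB u hu'.1
      linarith [hw'.2]
    · obtain ⟨t, ht1, htc⟩ := Finset.exists_subset_card_eq h
      refine ⟨t, ht1.trans (Finset.filter_subset _ _), htc, fun u hu w hw => ?_⟩
      have hu' := Finset.mem_filter.mp (ht1 hu)
      have hw' := Finset.mem_filter.mp (ht1 hw)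
      have h1 : 7071/10000 * M < D u := not_le.mp hu'.2
      have h2 := hA w hw'.1
      linarith
  -- embedding of 13 vertices
  set φ : Fin 13 → V := fun k => (t.equivFin.symm (Fin.cast ht13.symm k) : V) with hφ
  have hφinj : Function.Injective φ :=
    Subtype.coe_injective.comp (t.equivFin.symm.injective.comp (Fin.cast_injective _))
  have hφt : ∀ k, φ k ∈ t := fun k => (t.equivFin.symm (Fin.cast ht13.symm k)).2
  set z : Fin 13 → ℂ := fun k => eC (pos (φ k)) - eC (pos v) with hz
  have hzne : ∀ k, z k ≠ 0 := by
    intro k hk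
    have h1 : eC (pos (φ k)) = eC (pos v) := sub_eq_zero.mp hk
    have h2 : dist (pos (φ k)) (pos v) = 0 := by rw [← eC_dist, h1, dist_self]
    exact hvne (φ k) (hts (hφt k)) (hinj (dist_eq_zero.mp h2))
  have hzabs : ∀ k, ‖z k‖ = D (φ k) := by
    intro k
    calc ‖z k‖ = dist (eC (pos (φ k))) (eC (pos v)) := (Complex.dist_eq _ _).symm
      _ = dist (pos (φ k)) (pos v) := eC_dist _ _
      _ = D (φ k) := dist_comm _ _
  obtain ⟨i, j, hij, hdisj⟩ := circle_pigeonhole (fun k => (z k).arg)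
  -- cosine lower bound for the pair
  have hcosb : 8839/10000 ≤ Real.cos ((z i).arg - (z j).arg) := by
    have h13 : 2*π/13 ≤ π := by linarith [Real.pi_pos]
    have hri := Complex.arg_mem_Ioc (z i)
    have hrj := Complex.arg_mem_Ioc (z j)
    have hcb := cos_2pi13
    rw [← Real.cos_abs ((z i).arg - (z j).arg)]
    rcases hdisj with hle | hge
    · have := Real.cos_le_cos_of_nonneg_of_le_pi (abs_nonneg _) h13 hle
      linarith
    · have habs : |(z i).arg - (z j).arg| < 2*π := abs_sub_lt_iff.mpr
        ⟨by linarith [hri.1, hri.2, hrj.1, hrj.2], by linarith [hri.1, hri.2, hrj.1, hrj.2]⟩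
      have h0 : 0 ≤ 2*π - |(z i).arg - (z j).arg| := by linarith
      have hmono := Real.cos_le_cos_of_nonneg_of_le_pi h0 h13 hge
      rw [Real.cos_two_pi_sub] at hmono
      linarith
  -- law of cosines for the pair
  have hlaw0 := lawcos (z i) (z j) (hzne i) (hzne j)
  rw [hzabs i, hzabs j] at hlaw0
  have hzz : z i - z j = eC (pos (φ i)) - eC (pos (φ j)) := by
    simp only [hz]; ring
  have habsd : ‖z i - z j‖ = dist (pos (φ i)) (pos (φ j)) := by
    rw [hzz, ← Complex.dist_eq, eC_dist]
  rw [habsd] at hlaw0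
  have huw : φ i ≠ φ j := fun h => hij (hφinj h)
  have hus : φ i ∈ s := hts (hφt i)
  have hws : φ j ∈ s := hts (hφt j)
  rcases le_total (D (φ i)) (D (φ j)) with hle | hle
  · exact final_ineq (hDpos _ hws) (hrat _ (hφt i) _ (hφt j)) hle hcosb dist_nonneg
      (hC _ _ hus hws huw) hlaw0
  · refine final_ineq (hDpos _ hus) (hrat _ (hφt j) _ (hφt i)) hle hcosb (dist_nonneg : (0:ℝ) ≤ dist (pos (φ i)) (pos (φ j))) ?_ ?_
    · have h4 := hC _ _ hws hus huw.symm
      rwa [dist_comm (pos (φ j)) (pos (φ i))] at h4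
    · rw [hlaw0]; ring
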